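/- Let d ∈ {1,...,9} and let i be a positive integer whose decimal leading digit is NOT d, with k = min{m ∈ ℕ : d·10^m > i}. Then the number of integers in {1,...,i} whose decimal leading digit equals d is (10^k − 1)/9. -/

import Mathlib

open Finset

/-- The leading (first) decimal digit of a positive integer. -/
def leadingDigit (n : ℕ) : ℕ := n / 10 ^ (Nat.log 10 n)

/-- The number of integers in {1,...,i} whose decimal leading digit equals d. -/
def ldCount (d i : ℕ) : ℕ := ((Finset.Icc 1 i).filter (fun j => leadingDigit j = d)).card

/-- Probability that the leading digit is d when i is uniform on {1,...,n} and j uniform on {1,...,i}. -/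
noncomputable def P (d n : ℕ) : ℝ := (1 / (n : ℝ)) * ∑ i ∈ Finset.Icc 1 n, (ldCount d i : ℝ) / i

lemma geom_aux (k : ℕ) : ∑ m ∈ Finset.range k, 10 ^ m = (10 ^ k - 1) / 9 := by
  have h : 9 * (∑ m ∈ Finset.range k, 10 ^ m) + 1 = 10 ^ k := by
    induction k with
    | zero => simp
    | succ n ih => rw [Finset.sum_range_succ, pow_succ]; omega
  omega

theorem ldCount_of_leading_ne (d i k : ℕ) (hd : d ∈ Finset.Icc 1 9) (hi : 1 ≤ i)
    (hlead : leadingDigit i ≠ d)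
    (hk : IsLeast {m : ℕ | d * 10 ^ m > i} k) :
    ldCount d i = (10 ^ k - 1) / 9 := by
  obtain ⟨hkmem, hkleast⟩ := hk
  simp only [Finset.mem_Icc] at hd
  obtain ⟨hd1, hd9⟩ := hd
  have hkmem' : d * 10 ^ k > i := hkmem
  -- key upper bound: for every m < k, (d+1) * 10 ^ m ≤ i
  have hupper : ∀ m, m < k → (d + 1) * 10 ^ m ≤ i := by
    intro m hm
    have hk1 : 1 ≤ k := by omega
    set e := k - 1 with he
    have hme : m ≤ e := by omega
    have hde : ¬ (d * 10 ^ e > i) := by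
      intro h
      have := hkleast h
      omega
    have h1 : d * 10 ^ e ≤ i := by omega
    have hpe : 0 < 10 ^ e := Nat.pow_pos (by norm_num)
    have hq : d ≤ i / 10 ^ e := (Nat.le_div_iff_mul_le hpe).2 h1
    have hq' : d + 1 ≤ i / 10 ^ e := by
      rcases Nat.lt_or_ge d (i / 10 ^ e) with h | h
      · omega
      · exfalso
        have heq : i / 10 ^ e = d := by omega
        have hiub : i < (d + 1) * 10 ^ e := by
          have := (Nat.div_lt_iff_lt_mul hpe).1 (by omega : i / 10 ^ e < d + 1)
          omega
        have hlog : Nat.log 10 i = e := by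
          apply Nat.log_eq_of_pow_le_of_lt_pow
          · calc 10 ^ e = 1 * 10 ^ e := (one_mul _).symm
            _ ≤ d * 10 ^ e := Nat.mul_le_mul_right _ hd1
            _ ≤ i := h1
          · calc i < (d + 1) * 10 ^ e := hiub
            _ ≤ 10 * 10 ^ e := Nat.mul_le_mul_right _ (by omega)
            _ = 10 ^ (e + 1) := by ring
        apply hlead
        unfold leadingDigit
        rw [hlog, heq]
    calc (d + 1) * 10 ^ m ≤ (d + 1) * 10 ^ e :=
          Nat.mul_le_mul_left _ (Nat.pow_le_pow_right (by norm_num) hme)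
    _ ≤ (i / 10 ^ e) * 10 ^ e := Nat.mul_le_mul_right _ hq'
    _ ≤ i := Nat.div_mul_le_self _ _
  have key : (Finset.Icc 1 i).filter (fun j => leadingDigit j = d)
      = (Finset.range k).biUnion (fun m => Finset.Ico (d * 10 ^ m) ((d + 1) * 10 ^ m)) := by
    ext j
    simp only [Finset.mem_filter, Finset.mem_Icc, Finset.mem_biUnion, Finset.mem_range,
      Finset.mem_Ico]
    constructor
    · rintro ⟨⟨hj1, hji⟩, hlj⟩
      set m := Nat.log 10 j with hm
      have hpm : 0 < 10 ^ m := Nat.pow_pos (by norm_num)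
      have hjd : j / 10 ^ m = d := hlj
      have hlb : d * 10 ^ m ≤ j := by
        calc d * 10 ^ m = (j / 10 ^ m) * 10 ^ m := by rw [hjd]
        _ ≤ j := Nat.div_mul_le_self _ _
      have hub : j < (d + 1) * 10 ^ m := by
        have := (Nat.div_lt_iff_lt_mul hpm).1 (by omega : j / 10 ^ m < d + 1)
        omega
      refine ⟨m, ?_, hlb, hub⟩
      by_contra h
      push_neg at h
      have : d * 10 ^ k ≤ d * 10 ^ m :=
        Nat.mul_le_mul_left _ (Nat.pow_le_pow_right (by norm_num) h)
      omega
    · rintro ⟨m, hmk, hlb, hub⟩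
      have hpm : 0 < 10 ^ m := Nat.pow_pos (by norm_num)
      have hj1 : 1 ≤ j := by
        have : 1 * 10 ^ m ≤ d * 10 ^ m := Nat.mul_le_mul_right _ hd1
        omega
      have hji : j ≤ i := by
        have := hupper m hmk
        omega
      have hlog : Nat.log 10 j = m := by
        apply Nat.log_eq_of_pow_le_of_lt_pow
        · calc 10 ^ m = 1 * 10 ^ m := (one_mul _).symm
          _ ≤ d * 10 ^ m := Nat.mul_le_mul_right _ hd1
          _ ≤ j := hlb
        · calc j < (d + 1) * 10 ^ m := hub
          _ ≤ 10 * 10 ^ m := Nat.mul_le_mul_right _ (by omega)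
          _ = 10 ^ (m + 1) := by ring
      refine ⟨⟨hj1, hji⟩, ?_⟩
      unfold leadingDigit
      rw [hlog]
      exact Nat.div_eq_of_lt_le hlb hub
  have hdisj : ∀ x y : ℕ, x < y →
      Disjoint (Finset.Ico (d * 10 ^ x) ((d + 1) * 10 ^ x))
        (Finset.Ico (d * 10 ^ y) ((d + 1) * 10 ^ y)) := by
    intro x y hxy
    have : (d + 1) * 10 ^ x ≤ d * 10 ^ y := by
      calc (d + 1) * 10 ^ x ≤ 10 * 10 ^ x := Nat.mul_le_mul_right _ (by omega)
      _ = 10 ^ (x + 1) := by ring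
      _ ≤ 10 ^ y := Nat.pow_le_pow_right (by norm_num) (by omega)
      _ = 1 * 10 ^ y := (one_mul _).symm
      _ ≤ d * 10 ^ y := Nat.mul_le_mul_right _ hd1
    simp only [Finset.disjoint_left, Finset.mem_Ico]
    intro a ha hb
    omega
  unfold ldCount
  rw [key, Finset.card_biUnion]
  · have : ∀ m ∈ Finset.range k,
        (Finset.Ico (d * 10 ^ m) ((d + 1) * 10 ^ m)).card = 10 ^ m := by
      intro m _
      rw [Nat.card_Ico]
      have h : (d + 1) * 10 ^ m = d * 10 ^ m + 10 ^ m := by ring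
      rw [h, Nat.add_sub_cancel_left]
    rw [Finset.sum_congr rfl this, geom_aux]
  · intro x hx y hy hxy
    rcases Nat.lt_or_ge x y with h | h
    · exact hdisj x y h
    · exact (hdisj y x (by omega)).symm
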